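/- Let E be a directed graph and K a field. Up to graded isomorphism, the finite-dimensional graded simple modules over the ℤ-graded algebra L_K(E) are exactly the shifted Chen modules V_{[x]}(n), where n ∈ ℤ and x is a singular vertex of E such that the set {μ ∈ F(E) : r(μ) = x} of finite paths ending at x is finite. -/

import Mathlib

open scoped Classical

/-- A directed graph: vertices, edges, source and range maps. -/
structure DirGraph : Type 1 where
  V : Type
  E : Type
  s : E → V
  r : E → V

namespace DirGraph

variable (G : DirGraph)

/-- A finite path: a source vertex together with a compatible list of edges
(the empty list gives the path of length 0 at `src`). -/
structure FinPath where
  src : G.V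
  edges : List G.E
  src_eq : ∀ e ∈ edges.head?, G.s e = src
  chain : edges.Chain' (fun e f => G.r e = G.s f)

variable {G}

/-- The range of a finite path. -/
def FinPath.rng (μ : G.FinPath) : G.V :=
  ((μ.edges.getLast?).map G.r).getD μ.src

/-- The length of a finite path. -/
def FinPath.length (μ : G.FinPath) : ℕ := μ.edges.length

variable (G)

/-- An infinite path. -/
structure InfPath where
  edges : ℕ → G.E
  chain : ∀ n, G.r (edges n) = G.s (edges (n + 1))

/-- The source of an infinite path. -/
def InfPath.src {G : DirGraph} (p : G.InfPath) : G.V := G.s (p.edges 0)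

def IsSink (v : G.V) : Prop := ∀ e, G.s e ≠ v

def IsInfEmitter (v : G.V) : Prop := {e | G.s e = v}.Infinite

def IsSingular (v : G.V) : Prop := IsSink G v ∨ IsInfEmitter G v

/-- Boundary paths: infinite paths, together with finite paths ending in a singular vertex. -/
def BPath : Type := {x : G.FinPath ⊕ G.InfPath // ∀ μ, x = Sum.inl μ → IsSingular G μ.rng}

variable {G}

/-- The source of a boundary path. -/
def BPath.src (x : G.BPath) : G.V :=
  match x.1 with
  | Sum.inl μ => μ.src
  | Sum.inr p => p.src

def BPath.IsInfinite (x : G.BPath) : Prop := ∃ p, x.1 = Sum.inr p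

/-- `IsCat μ p x` means `x = μ p`, i.e. `x` is the concatenation of the finite path `μ`
with the boundary path `p` (in particular `r(μ) = s(p)`). -/
def IsCat (μ : G.FinPath) (p x : G.BPath) : Prop :=
  μ.rng = p.src ∧
  match p.1, x.1 with
  | Sum.inl q, Sum.inl ξ => ξ.src = μ.src ∧ ξ.edges = μ.edges ++ q.edges
  | Sum.inr q, Sum.inr ξ =>
      (∀ (i : ℕ) (h : i < μ.edges.length), ξ.edges i = μ.edges.get ⟨i, h⟩) ∧
      (∀ i : ℕ, ξ.edges (μ.edges.length + i) = q.edges i)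
  | _, _ => False

/-- `x ∼_k y` : tail equivalence with lag `k`. -/
def TailEqLag (x y : G.BPath) (k : ℤ) : Prop :=
  ∃ (μ ν : G.FinPath) (p : G.BPath),
    IsCat μ p x ∧ IsCat ν p y ∧ (μ.length : ℤ) - (ν.length : ℤ) = k

/-- Tail equivalence. -/
def TailEq (x y : G.BPath) : Prop := ∃ k, TailEqLag x y k

/-- The tail-equivalence class (orbit) of a boundary path. -/
def orbit (x : G.BPath) : Set G.BPath := {y | TailEq y x}

/-- A closed path: positive length, same source and range. -/
def FinPath.IsClosed (c : G.FinPath) : Prop := 0 < c.length ∧ c.rng = c.src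

/-- A boundary path is rational if it is tail equivalent to `c^∞` for some closed path `c`;
here `c^∞` is characterized as the unique boundary path `p` with `p = c p`. -/
def IsRational (x : G.BPath) : Prop :=
  ∃ (c : G.FinPath) (p : G.BPath), 0 < c.length ∧ IsCat c p p ∧ TailEq x p

/-- A simple closed path: a closed path which is not a proper power of a closed path. -/
def FinPath.IsSimpleClosed (c : G.FinPath) : Prop :=
  c.IsClosed ∧
    ¬ ∃ (d : G.FinPath) (n : ℕ), 2 ≤ n ∧ d.IsClosed ∧ c.src = d.src ∧
        c.edges = (List.replicate n d.edges).flatten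

/-- A cycle: a closed path passing through no vertex twice. -/
def FinPath.IsCycle (c : G.FinPath) : Prop := c.IsClosed ∧ (c.edges.map G.s).Nodup

/-- An exit for a finite path. -/
def FinPath.HasExit (c : G.FinPath) : Prop :=
  ∃ (i : ℕ) (h : i < c.edges.length) (e : G.E),
    G.s e = G.s (c.edges.get ⟨i, h⟩) ∧ e ≠ c.edges.get ⟨i, h⟩

/-- `c` is a rotation of `d`. -/
def FinPath.IsRotationOf (c d : G.FinPath) : Prop := ∃ i, c.edges = d.edges.rotate i

/-- A maximal cycle: a cycle such that any cycle from which there is a finite path to its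
source is a rotation of it. -/
def FinPath.IsMaxCycle (c : G.FinPath) : Prop :=
  c.IsCycle ∧ ∀ d : G.FinPath, d.IsCycle →
    (∃ μ : G.FinPath, μ.src = d.src ∧ μ.rng = c.src) → d.IsRotationOf c

/-- A maximal sink: a sink with no finite path from the source of any cycle to it. -/
def IsMaxSink (G : DirGraph) (v : G.V) : Prop :=
  IsSink G v ∧ ¬ ∃ (d μ : G.FinPath), d.IsCycle ∧ μ.src = d.src ∧ μ.rng = v

/-- A graph is row-finite if every vertex emits finitely many edges. -/
def RowFinite (G : DirGraph) : Prop := ∀ v : G.V, {e | G.s e = v}.Finite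

/-- The set of predecessors of a vertex. -/
def preds (G : DirGraph) (v : G.V) : Set G.V := {w | ∃ μ : G.FinPath, μ.src = w ∧ μ.rng = v}

/-- The finite path of length 0 at a vertex. -/
def vertexPath (G : DirGraph) (v : G.V) : G.FinPath :=
  ⟨v, [], by intro e he; simp at he, List.isChain_nil⟩

/-- A singular vertex, seen as a boundary path. -/
def vertexBPath (G : DirGraph) (v : G.V) (h : IsSingular G v) : G.BPath :=
  ⟨Sum.inl (vertexPath G v), by
    intro μ hμ
    injection hμ with h2
    subst h2
    exact h⟩

/-- The finite path consisting of a single edge. -/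
def singleE (G : DirGraph) (e : G.E) : G.FinPath :=
  ⟨G.s e, [e], by
    intro f hf
    simp only [List.head?_cons, Option.mem_def, Option.some.injEq] at hf
    subst hf
    rfl, List.isChain_singleton e⟩

/-- `a_μ`: the product of the values of `a` along a finite path. -/
def aval {G : DirGraph} {K : Type} [Field K] (a : G.E → K) (μ : G.FinPath) : K :=
  (μ.edges.map a).prod

/-! ## The Leavitt path algebra -/

/-- Generators of the Leavitt path algebra: vertices, edges and ghost edges. -/
inductive Gen (G : DirGraph) : Type
  | vtx : G.V → Gen G
  | edg : G.E → Gen G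
  | ghd : G.E → Gen G

/-- The defining relations of the Leavitt path algebra. -/
inductive LRel (G : DirGraph) (K : Type) [Field K] :
    FreeAlgebra K (Gen G) → FreeAlgebra K (Gen G) → Prop
  | vv_eq (v : G.V) :
      LRel G K (FreeAlgebra.ι K (Gen.vtx v) * FreeAlgebra.ι K (Gen.vtx v))
        (FreeAlgebra.ι K (Gen.vtx v))
  | vv_ne {v w : G.V} (h : v ≠ w) :
      LRel G K (FreeAlgebra.ι K (Gen.vtx v) * FreeAlgebra.ι K (Gen.vtx w)) 0
  | e1l (e : G.E) :
      LRel G K (FreeAlgebra.ι K (Gen.vtx (G.s e)) * FreeAlgebra.ι K (Gen.edg e))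
        (FreeAlgebra.ι K (Gen.edg e))
  | e1r (e : G.E) :
      LRel G K (FreeAlgebra.ι K (Gen.edg e) * FreeAlgebra.ι K (Gen.vtx (G.r e)))
        (FreeAlgebra.ι K (Gen.edg e))
  | e2l (e : G.E) :
      LRel G K (FreeAlgebra.ι K (Gen.vtx (G.r e)) * FreeAlgebra.ι K (Gen.ghd e))
        (FreeAlgebra.ι K (Gen.ghd e))
  | e2r (e : G.E) :
      LRel G K (FreeAlgebra.ι K (Gen.ghd e) * FreeAlgebra.ι K (Gen.vtx (G.s e)))
        (FreeAlgebra.ι K (Gen.ghd e))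
  | ck1_eq (e : G.E) :
      LRel G K (FreeAlgebra.ι K (Gen.ghd e) * FreeAlgebra.ι K (Gen.edg e))
        (FreeAlgebra.ι K (Gen.vtx (G.r e)))
  | ck1_ne {e f : G.E} (h : e ≠ f) :
      LRel G K (FreeAlgebra.ι K (Gen.ghd e) * FreeAlgebra.ι K (Gen.edg f)) 0
  | ck2 (v : G.V) (hfin : {e | G.s e = v}.Finite) (hne : ∃ e, G.s e = v) :
      LRel G K (FreeAlgebra.ι K (Gen.vtx v))
        (∑ e ∈ hfin.toFinset, FreeAlgebra.ι K (Gen.edg e) * FreeAlgebra.ι K (Gen.ghd e))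

/-- The Leavitt path algebra of `G` over `K`. -/
abbrev LPA (G : DirGraph) (K : Type) [Field K] : Type := RingQuot (LRel G K)

/-- The image of a vertex in the Leavitt path algebra. -/
def ofV (G : DirGraph) (K : Type) [Field K] (v : G.V) : LPA G K :=
  RingQuot.mkAlgHom K (LRel G K) (FreeAlgebra.ι K (Gen.vtx v))

/-- The image of an edge in the Leavitt path algebra. -/
def ofE (G : DirGraph) (K : Type) [Field K] (e : G.E) : LPA G K :=
  RingQuot.mkAlgHom K (LRel G K) (FreeAlgebra.ι K (Gen.edg e))

/-- The image of a ghost edge in the Leavitt path algebra. -/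
def ofG (G : DirGraph) (K : Type) [Field K] (e : G.E) : LPA G K :=
  RingQuot.mkAlgHom K (LRel G K) (FreeAlgebra.ι K (Gen.ghd e))

/-- The element `μ` of the Leavitt path algebra associated to a finite path `μ`. -/
def pathElem (G : DirGraph) (K : Type) [Field K] (μ : G.FinPath) : LPA G K :=
  ofV G K μ.src * (μ.edges.map (ofE G K)).prod

/-- The element `μ^*` of the Leavitt path algebra associated to a finite path `μ`. -/
def pathStarElem (G : DirGraph) (K : Type) [Field K] (μ : G.FinPath) : LPA G K :=
  (μ.edges.reverse.map (ofG G K)).prod * ofV G K μ.src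

/-- The degree-`n` homogeneous component of the canonical `ℤ`-grading of the Leavitt
path algebra: the span of the monomials `μ ν^*` with `|μ| - |ν| = n`. -/
def LPAdeg (G : DirGraph) (K : Type) [Field K] (n : ℤ) : Submodule K (LPA G K) :=
  Submodule.span K {x | ∃ μ ν : G.FinPath, μ.rng = ν.rng ∧
    (μ.length : ℤ) - (ν.length : ℤ) = n ∧ x = pathElem G K μ * pathStarElem G K ν}

/-- `W` is a `ℤ`-grading making `M` a graded module over the canonically graded
Leavitt path algebra. -/
def IsModuleGrading (G : DirGraph) (K : Type) [Field K] (M : Type) [AddCommGroup M]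
    [Module K M] [Module (LPA G K) M] (W : ℤ → Submodule K M) : Prop :=
  DirectSum.IsInternal W ∧
    ∀ (m k : ℤ) (a : LPA G K) (y : M), a ∈ LPAdeg G K m → y ∈ W k → a • y ∈ W (m + k)

/-- A set is graded (with respect to a grading `W`) if each of its elements is a finite sum
of homogeneous elements of the set. -/
def GradedCarrier {K M : Type} [Field K] [AddCommGroup M] [Module K M]
    (W : ℤ → Submodule K M) (S : Set M) : Prop :=
  ∀ m ∈ S, ∃ l : List M, (∀ z ∈ l, z ∈ S ∧ ∃ k, z ∈ W k) ∧ l.sum = m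

/-- A graded isomorphism between graded modules over the Leavitt path algebra. -/
def GradedIsoLPA (G : DirGraph) (K : Type) [Field K] (M N : Type)
    [AddCommGroup M] [AddCommGroup N] [Module K M] [Module K N]
    [Module (LPA G K) M] [Module (LPA G K) N]
    (W : ℤ → Submodule K M) (W' : ℤ → Submodule K N) : Prop :=
  ∃ f : M ≃ₗ[LPA G K] N, (∀ k, ∀ m ∈ W k, f m ∈ W' k) ∧ ∀ k, ∀ n ∈ W' k, f.symm n ∈ W k

/-- A module over the Leavitt path algebra is unital if it is generated by the images of the
vertices. -/
def IsUnitalModule (G : DirGraph) (K : Type) [Field K] (M : Type) [AddCommGroup M]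
    [Module (LPA G K) M] : Prop :=
  ∀ m : M, m ∈ Submodule.span (LPA G K) {y : M | ∃ (v : G.V) (m' : M), y = ofV G K v • m'}

/-! ## Chen modules, specified by a basis and the action of the generators -/

/-- A specification of the (twisted) Chen module attached to a boundary path `x`:
an `L_K(E)`-module `M` which is a `K'`-vector space with basis the tail-equivalence class
of `x`, the generators acting by the τ-twisted shift formulas. Here `K ⊆ K'` is a field
extension and `τ : E¹ → K'` is a family of nonzero scalars. -/
structure ChenSpecT (G : DirGraph) (K K' : Type) [Field K] [Field K'] [Algebra K K']
    (τ : G.E → K') (x : G.BPath) (M : Type) [AddCommGroup M] [Module K' M]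
    [Module (LPA G K) M] : Type where
  tau_ne : ∀ e, τ e ≠ 0
  basis : Module.Basis (orbit x) K' M
  act_v : ∀ (v : G.V) (p : orbit x),
    ofV G K v • basis p = if v = BPath.src (p : G.BPath) then basis p else 0
  act_e : ∀ (e : G.E) (p q : orbit x), IsCat (singleE G e) (p : G.BPath) (q : G.BPath) →
    ofE G K e • basis p = τ e • basis q
  act_e_zero : ∀ (e : G.E) (p : orbit x),
    (¬ ∃ q : G.BPath, IsCat (singleE G e) (p : G.BPath) q) → ofE G K e • basis p = 0
  act_g : ∀ (e : G.E) (p q : orbit x), IsCat (singleE G e) (p : G.BPath) (q : G.BPath) →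
    ofG G K e • basis q = (τ e)⁻¹ • basis p
  act_g_zero : ∀ (e : G.E) (q : orbit x),
    (¬ ∃ p : G.BPath, IsCat (singleE G e) p (q : G.BPath)) → ofG G K e • basis q = 0

/-- Specification of the Chen module `V_{[x]}^a` twisted by `a : E¹ → K^*`
(`a = 1` gives `V_{[x]}`). -/
abbrev ChenSpec (G : DirGraph) (K : Type) [Field K] (a : G.E → K) (x : G.BPath) (M : Type)
    [AddCommGroup M] [Module K M] [Module (LPA G K) M] : Type :=
  ChenSpecT G K K a x M

/-- The canonical grading on a Chen module: the degree-`k` component is spanned by the basis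
elements tail-equivalent to `x` with lag `k`. -/
def chenW {G : DirGraph} {K' : Type} [Field K'] {x : G.BPath} {M : Type}
    [AddCommGroup M] [Module K' M] (b : Module.Basis (orbit x) K' M) (k : ℤ) : Submodule K' M :=
  Submodule.span K' (⇑b '' {p : orbit x | TailEqLag (p : G.BPath) x k})

/-! ## The module `K L_x` -/

/-- The set `L_x` of pairs `(y, k)` with `y ∼_k x`. -/
def Lset (G : DirGraph) (x : G.BPath) : Set (G.BPath × ℤ) := {yk | TailEqLag yk.1 x yk.2}

/-- The underlying `K`-vector space of the module `K L_x`, with basis `L_x`. -/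
abbrev KLCarrier (G : DirGraph) (K : Type) [Field K] (x : G.BPath) : Type := (Lset G x) →₀ K

/-- Specification of the `L_K(E)`-module structure on `K L_x`, given by
`(μ ν^*) ⬝ (y, k) = (μ p, |μ| - |ν| + k)` when `y = ν p`, and `0` otherwise. The module
structure is encoded as a `K`-algebra homomorphism `ρ` to the endomorphism algebra. -/
def KLSpec (G : DirGraph) (K : Type) [Field K] (x : G.BPath)
    (ρ : LPA G K →ₐ[K] Module.End K (KLCarrier G K x)) : Prop :=
  (∀ (μ ν : G.FinPath), μ.rng = ν.rng → ∀ (yk zk : Lset G x) (p : G.BPath),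
      IsCat ν p (yk : G.BPath × ℤ).1 → IsCat μ p (zk : G.BPath × ℤ).1 →
      (zk : G.BPath × ℤ).2 = (yk : G.BPath × ℤ).2 + (μ.length : ℤ) - (ν.length : ℤ) →
      ρ (pathElem G K μ * pathStarElem G K ν) (Finsupp.single yk 1) = Finsupp.single zk 1) ∧
  (∀ (μ ν : G.FinPath), μ.rng = ν.rng → ∀ yk : Lset G x,
      (¬ ∃ p : G.BPath, IsCat ν p (yk : G.BPath × ℤ).1) →
      ρ (pathElem G K μ * pathStarElem G K ν) (Finsupp.single yk 1) = 0)

/-- The canonical grading of `K L_x`: `(y, k)` is homogeneous of degree `k`. -/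
noncomputable def KLgr (G : DirGraph) (K : Type) [Field K] (x : G.BPath) (k : ℤ) :
    Submodule K (KLCarrier G K x) :=
  Submodule.span K {m | ∃ yk : Lset G x, (yk : G.BPath × ℤ).2 = k ∧ m = Finsupp.single yk 1}

end DirGraph

open DirGraph

namespace DirGraph

variable {G : DirGraph}

/-! ### Path basics -/

theorem FinPath.ext' {μ ν : G.FinPath} (h1 : μ.src = ν.src) (h2 : μ.edges = ν.edges) :
    μ = ν := by
  cases μ; cases ν; simp_all

theorem FinPath.src_head {μ : G.FinPath} {e : G.E} {t : List G.E}
    (h : μ.edges = e :: t) : G.s e = μ.src :=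
  μ.src_eq e (by rw [h]; rfl)

theorem FinPath.rng_nil {μ : G.FinPath} (h : μ.edges = []) : μ.rng = μ.src := by
  simp [FinPath.rng, h]

/-- Prepend an edge to a path. -/
def consPath (e : G.E) (μ : G.FinPath) (h : G.r e = μ.src) : G.FinPath where
  src := G.s e
  edges := e :: μ.edges
  src_eq := by intro f hf; simp at hf; subst hf; rfl
  chain := by
    refine List.isChain_cons.2 ⟨?_, μ.chain⟩
    intro f hf; rw [h]; exact (μ.src_eq f hf).symm

@[simp] theorem consPath_edges (e : G.E) (μ : G.FinPath) (h : G.r e = μ.src) :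
    (consPath e μ h).edges = e :: μ.edges := rfl

@[simp] theorem consPath_src (e : G.E) (μ : G.FinPath) (h : G.r e = μ.src) :
    (consPath e μ h).src = G.s e := rfl

theorem consPath_rng (e : G.E) (μ : G.FinPath) (h : G.r e = μ.src) :
    (consPath e μ h).rng = μ.rng := by
  rcases hl : μ.edges with _ | ⟨f, t⟩
  · simp [FinPath.rng, consPath, hl, h]
  · obtain ⟨y, hy⟩ := Option.isSome_iff_exists.1 (List.getLast?_isSome.2 (List.cons_ne_nil f t))
    simp [FinPath.rng, consPath, hl, hy]

/-- Remove the first edge of a path. -/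
def tailPath (μ : G.FinPath) (e : G.E) (t : List G.E) (h : μ.edges = e :: t) : G.FinPath where
  src := G.r e
  edges := t
  src_eq := by
    intro f hf
    have := μ.chain
    rw [h] at this
    exact ((List.isChain_cons.1 this).1 f hf).symm
  chain := by
    have := μ.chain; rw [h] at this; exact (List.isChain_cons.1 this).2

@[simp] theorem tailPath_edges (μ : G.FinPath) (e : G.E) (t : List G.E) (h : μ.edges = e :: t) :
    (tailPath μ e t h).edges = t := rfl

@[simp] theorem tailPath_src (μ : G.FinPath) (e : G.E) (t : List G.E) (h : μ.edges = e :: t) :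
    (tailPath μ e t h).src = G.r e := rfl

theorem tailPath_rng (μ : G.FinPath) (e : G.E) (t : List G.E) (h : μ.edges = e :: t) :
    (tailPath μ e t h).rng = μ.rng := by
  revert h
  rcases t with _ | ⟨f, t'⟩ <;> intro h
  · simp [FinPath.rng, tailPath, h]
  · obtain ⟨y, hy⟩ := Option.isSome_iff_exists.1 (List.getLast?_isSome.2 (List.cons_ne_nil f t'))
    simp [FinPath.rng, tailPath, h, hy]

theorem consPath_tailPath (μ : G.FinPath) (e : G.E) (t : List G.E) (h : μ.edges = e :: t) :
    consPath e (tailPath μ e t h) rfl = μ := by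
  apply FinPath.ext'
  · exact FinPath.src_head h
  · exact h.symm


/-! ### Ring lemmas in the Leavitt path algebra -/

section RingLemmas

variable {K : Type} [Field K]

private theorem lrel {x y : FreeAlgebra K (Gen G)} (h : LRel G K x y) :
    RingQuot.mkAlgHom K (LRel G K) x = RingQuot.mkAlgHom K (LRel G K) y :=
  RingQuot.mkAlgHom_rel K h

theorem ofV_mul_ofV_self (v : G.V) : ofV G K v * ofV G K v = ofV G K v := by
  unfold ofV; rw [← map_mul]; exact lrel (LRel.vv_eq v)

theorem ofV_mul_ofV_ne {v w : G.V} (h : v ≠ w) : ofV G K v * ofV G K w = 0 := by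
  unfold ofV; rw [← map_mul]
  have := lrel (K := K) (LRel.vv_ne h)
  rwa [map_zero] at this

theorem ofV_mul_ofE (e : G.E) : ofV G K (G.s e) * ofE G K e = ofE G K e := by
  unfold ofV ofE; rw [← map_mul]; exact lrel (LRel.e1l e)

theorem ofE_mul_ofV (e : G.E) : ofE G K e * ofV G K (G.r e) = ofE G K e := by
  unfold ofV ofE; rw [← map_mul]; exact lrel (LRel.e1r e)

theorem ofV_mul_ofG (e : G.E) : ofV G K (G.r e) * ofG G K e = ofG G K e := by
  unfold ofV ofG; rw [← map_mul]; exact lrel (LRel.e2l e)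

theorem ofG_mul_ofV (e : G.E) : ofG G K e * ofV G K (G.s e) = ofG G K e := by
  unfold ofV ofG; rw [← map_mul]; exact lrel (LRel.e2r e)

theorem ofG_mul_ofE_self (e : G.E) : ofG G K e * ofE G K e = ofV G K (G.r e) := by
  unfold ofV ofE ofG; rw [← map_mul]; exact lrel (LRel.ck1_eq e)

theorem ofG_mul_ofE_ne {e f : G.E} (h : e ≠ f) : ofG G K e * ofE G K f = 0 := by
  unfold ofE ofG; rw [← map_mul]
  have := lrel (K := K) (LRel.ck1_ne h)
  rwa [map_zero] at this

theorem ck2_sum (v : G.V) (hfin : {e | G.s e = v}.Finite) (hne : ∃ e, G.s e = v) :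
    ofV G K v = ∑ e ∈ hfin.toFinset, ofE G K e * ofG G K e := by
  unfold ofV ofE ofG
  have := lrel (K := K) (LRel.ck2 v hfin hne)
  rw [this, map_sum]
  simp only [map_mul]

theorem ofV_mul_ofE_ne {w : G.V} {e : G.E} (h : w ≠ G.s e) : ofV G K w * ofE G K e = 0 := by
  rw [← ofV_mul_ofE e, ← mul_assoc, ofV_mul_ofV_ne h, zero_mul]

theorem ofE_mul_ofV_ne {e : G.E} {w : G.V} (h : w ≠ G.r e) : ofE G K e * ofV G K w = 0 := by
  rw [← ofE_mul_ofV e, mul_assoc, ofV_mul_ofV_ne (fun hh => h hh.symm), mul_zero]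

theorem ofV_mul_ofG_ne {w : G.V} {e : G.E} (h : w ≠ G.r e) : ofV G K w * ofG G K e = 0 := by
  rw [← ofV_mul_ofG e, ← mul_assoc, ofV_mul_ofV_ne h, zero_mul]

theorem ofG_mul_ofV_ne {e : G.E} {w : G.V} (h : w ≠ G.s e) : ofG G K e * ofV G K w = 0 := by
  rw [← ofG_mul_ofV e, mul_assoc, ofV_mul_ofV_ne (fun hh => h hh.symm), mul_zero]

theorem pathElem_vertex (v : G.V) : pathElem G K (vertexPath G v) = ofV G K v := by
  simp [pathElem, vertexPath]

theorem pathStarElem_vertex (v : G.V) : pathStarElem G K (vertexPath G v) = ofV G K v := by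
  simp [pathStarElem, vertexPath]

theorem pathElem_cons (e : G.E) (μ : G.FinPath) (h : G.r e = μ.src) :
    pathElem G K (consPath e μ h) = ofE G K e * pathElem G K μ := by
  simp only [pathElem, consPath_edges, consPath_src, List.map_cons, List.prod_cons]
  rw [← mul_assoc, ← mul_assoc, ofV_mul_ofE, ← h, ofE_mul_ofV]

theorem pathStarElem_cons (e : G.E) (μ : G.FinPath) (h : G.r e = μ.src) :
    pathStarElem G K (consPath e μ h) = pathStarElem G K μ * ofG G K e := by
  simp only [pathStarElem, consPath_edges, consPath_src, List.reverse_cons, List.map_append,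
    List.prod_append, List.map_cons, List.map_nil, List.prod_cons, List.prod_nil, mul_one]
  rw [mul_assoc, ofG_mul_ofV, mul_assoc, ← h, ofV_mul_ofG]

theorem pathElem_mul_rng (μ : G.FinPath) :
    pathElem G K μ * ofV G K μ.rng = pathElem G K μ := by
  rcases List.eq_nil_or_concat μ.edges with h | ⟨l, e, h⟩
  · rw [FinPath.rng_nil h]
    simp [pathElem, h, ofV_mul_ofV_self]
  · rw [List.concat_eq_append] at h
    have hr : μ.rng = G.r e := by simp [FinPath.rng, h]
    rw [hr]
    simp only [pathElem, h, List.map_append, List.prod_append, List.map_cons, List.map_nil,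
      List.prod_cons, List.prod_nil, mul_one]
    rw [mul_assoc, mul_assoc, ofE_mul_ofV]

theorem ofV_mul_pathElem (w : G.V) (μ : G.FinPath) :
    ofV G K w * pathElem G K μ = if w = μ.src then pathElem G K μ else 0 := by
  rw [pathElem, ← mul_assoc]
  split
  · next h => rw [h, ofV_mul_ofV_self]
  · next h => rw [ofV_mul_ofV_ne h, zero_mul]

theorem pathStarElem_mul_ofV (μ : G.FinPath) (w : G.V) :
    pathStarElem G K μ * ofV G K w = if w = μ.src then pathStarElem G K μ else 0 := by
  rw [pathStarElem, mul_assoc]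
  split
  · next h => rw [h, ofV_mul_ofV_self]
  · next h => rw [ofV_mul_ofV_ne (fun hh => h hh.symm), mul_zero]

end RingLemmas


/-! ### Suffix paths -/

theorem vertexPath_rng (v : G.V) : (vertexPath G v).rng = v := by
  simp [FinPath.rng, vertexPath]

theorem singleE_rng (e : G.E) : (singleE G e).rng = G.r e := by
  simp [FinPath.rng, singleE]

theorem singleE_src (e : G.E) : (singleE G e).src = G.s e := rfl

theorem singleE_edges (e : G.E) : (singleE G e).edges = [e] := rfl

/-- The suffix of a path after removing the first `n` edges. -/
def sufPath (μ : G.FinPath) (n : ℕ) : G.FinPath where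
  src := (((μ.edges.drop n).head?).map G.s).getD μ.rng
  edges := μ.edges.drop n
  src_eq := by intro f hf; rw [Option.mem_def] at hf; simp [hf]
  chain := μ.chain.drop n

@[simp] theorem sufPath_edges (μ : G.FinPath) (n : ℕ) :
    (sufPath μ n).edges = μ.edges.drop n := rfl

theorem sufPath_rng (μ : G.FinPath) (n : ℕ) : (sufPath μ n).rng = μ.rng := by
  rcases hd : μ.edges.drop n with _ | ⟨f, t⟩
  · simp [FinPath.rng, sufPath, hd]
  · have h2 : μ.edges = μ.edges.take n ++ f :: t := by rw [← hd, List.take_append_drop]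
    obtain ⟨y, hy⟩ := Option.isSome_iff_exists.1 (List.getLast?_isSome.2 (List.cons_ne_nil f t))
    have h3 : μ.edges.getLast? = some y := by
      rw [h2, List.getLast?_append_of_ne_nil _ (List.cons_ne_nil f t), hy]
    simp [FinPath.rng, sufPath, hd, hy, h3]

theorem sufPath_zero (μ : G.FinPath) : sufPath μ 0 = μ := by
  apply FinPath.ext'
  · rcases hd : μ.edges with _ | ⟨f, t⟩
    · simp [sufPath, hd, FinPath.rng_nil hd]
    · simp [sufPath, hd, FinPath.src_head hd]
  · simp [sufPath]

theorem sufPath_full {μ : G.FinPath} {v : G.V} (h : μ.rng = v) :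
    sufPath μ μ.edges.length = vertexPath G v := by
  apply FinPath.ext'
  · simp [sufPath, vertexPath, List.drop_length, h]
  · simp [sufPath, vertexPath, List.drop_length]

theorem sufPath_tail (μ : G.FinPath) (e : G.E) (t : List G.E) (ht : μ.edges = e :: t) (n : ℕ) :
    sufPath (tailPath μ e t ht) n = sufPath μ (n + 1) := by
  have he : (tailPath μ e t ht).edges.drop n = μ.edges.drop (n + 1) := by
    simp [ht]
  apply FinPath.ext'
  · show ((((tailPath μ e t ht).edges.drop n).head?).map G.s).getD (tailPath μ e t ht).rng = _
    rw [he, tailPath_rng]; rfl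
  · simp [ht]

/-! ### The orbit of a singular vertex -/

section Orbit

variable (v : G.V) (hv : IsSingular G v)

/-- A path ending at the singular vertex `v`, as a boundary path. -/
def bpOf (μ : G.FinPath) (h : μ.rng = v) : G.BPath :=
  ⟨Sum.inl μ, by intro μ' h'; cases h'; rw [h]; exact hv⟩

@[simp] theorem bpOf_src (μ : G.FinPath) (h : μ.rng = v) :
    (bpOf v hv μ h).src = μ.src := rfl

theorem bpOf_inj {μ μ' : G.FinPath} {h : μ.rng = v} {h' : μ'.rng = v}
    (hh : bpOf v hv μ h = bpOf v hv μ' h') : μ = μ' := by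
  have := congrArg Subtype.val hh
  exact Sum.inl.inj this

theorem vertexBPath_eq_bpOf :
    vertexBPath G v hv = bpOf v hv (vertexPath G v) (vertexPath_rng v) := rfl

theorem cat_into_vertex {ν : G.FinPath} {p : G.BPath}
    (hc : IsCat ν p (vertexBPath G v hv)) :
    ν.edges = [] ∧ ν.src = v ∧ p = vertexBPath G v hv := by
  obtain ⟨h1, h2⟩ := hc
  obtain ⟨p1, hp⟩ := p
  cases p1 with
  | inl q =>
    obtain ⟨hs, he⟩ := h2
    simp only [vertexPath] at hs he
    have he' := he.symm
    rw [List.append_eq_nil_iff] at he'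
    obtain ⟨hν, hq⟩ := he'
    have hsrc : ν.src = v := hs.symm
    have hνr : ν.rng = v := by rw [FinPath.rng_nil hν, hsrc]
    have hqs : q.src = v := by
      have : ν.rng = q.src := h1
      rw [hνr] at this; exact this.symm
    have hq' : q = vertexPath G v := FinPath.ext' (by simp [vertexPath, hqs]) (by simp [vertexPath, hq])
    exact ⟨hν, hsrc, Subtype.ext (by simp [vertexBPath, hq'])⟩
  | inr q => exact h2.elim

theorem cat_from_vertex {μ : G.FinPath} {y : G.BPath}
    (hc : IsCat μ (vertexBPath G v hv) y) :
    ∃ h : μ.rng = v, y = bpOf v hv μ h := by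
  obtain ⟨h1, h2⟩ := hc
  have hr : μ.rng = v := h1
  obtain ⟨y1, hy⟩ := y
  cases y1 with
  | inl ξ =>
    obtain ⟨hs, he⟩ := h2
    simp only [vertexPath, List.append_nil] at he
    have : ξ = μ := FinPath.ext' hs he
    exact ⟨hr, Subtype.ext (by simp [bpOf, this])⟩
  | inr q => exact h2.elim

theorem cat_from_vertex' (μ : G.FinPath) (h : μ.rng = v) :
    IsCat μ (vertexBPath G v hv) (bpOf v hv μ h) :=
  ⟨h, rfl, (List.append_nil _).symm⟩

theorem cat_vertex_self :
    IsCat (vertexPath G v) (vertexBPath G v hv) (vertexBPath G v hv) :=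
  ⟨vertexPath_rng v, rfl, rfl⟩

theorem tailEqLag_iff (y : G.BPath) (k : ℤ) :
    TailEqLag y (vertexBPath G v hv) k ↔
      ∃ (μ : G.FinPath) (h : μ.rng = v), y = bpOf v hv μ h ∧ (μ.edges.length : ℤ) = k := by
  constructor
  · rintro ⟨μ, ν, p, hμ, hν, hk⟩
    obtain ⟨hνe, -, hp⟩ := cat_into_vertex v hv hν
    subst hp
    obtain ⟨h, hy⟩ := cat_from_vertex v hv hμ
    refine ⟨μ, h, hy, ?_⟩
    rw [← hk]
    simp [FinPath.length, hνe]
  · rintro ⟨μ, h, hy, hk⟩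
    exact ⟨μ, vertexPath G v, vertexBPath G v hv, hy ▸ cat_from_vertex' v hv μ h,
      cat_vertex_self v hv, by simp [FinPath.length, vertexPath, hk]⟩

theorem mem_orbit_iff (y : G.BPath) :
    y ∈ orbit (vertexBPath G v hv) ↔ ∃ (μ : G.FinPath) (h : μ.rng = v), y = bpOf v hv μ h := by
  constructor
  · rintro ⟨k, hk⟩
    obtain ⟨μ, h, hy, -⟩ := (tailEqLag_iff v hv y k).1 hk
    exact ⟨μ, h, hy⟩
  · rintro ⟨μ, h, hy⟩
    exact ⟨μ.edges.length, (tailEqLag_iff v hv y _).2 ⟨μ, h, hy, rfl⟩⟩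

theorem bpOf_mem_orbit (μ : G.FinPath) (h : μ.rng = v) :
    bpOf v hv μ h ∈ orbit (vertexBPath G v hv) :=
  (mem_orbit_iff v hv _).2 ⟨μ, h, rfl⟩

theorem cat_singleE_cons (e : G.E) (μ : G.FinPath) (h : μ.rng = v) (h' : G.r e = μ.src) :
    IsCat (singleE G e) (bpOf v hv μ h)
      (bpOf v hv (consPath e μ h') ((consPath_rng e μ h').trans h)) :=
  ⟨(singleE_rng e).trans h', rfl, rfl⟩

theorem cat_singleE_exists {e : G.E} {μ : G.FinPath} {h : μ.rng = v} {p : G.BPath}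
    (hc : IsCat (singleE G e) p (bpOf v hv μ h)) :
    ∃ (t : List G.E) (ht : μ.edges = e :: t),
      p = bpOf v hv (tailPath μ e t ht) ((tailPath_rng μ e t ht).trans h) := by
  obtain ⟨h1, h2⟩ := hc
  obtain ⟨p1, hp⟩ := p
  cases p1 with
  | inl q =>
    obtain ⟨hs, he⟩ := h2
    have ht : μ.edges = e :: q.edges := he
    refine ⟨q.edges, ht, ?_⟩
    have h1' : G.r e = q.src := by
      rw [singleE_rng] at h1
      exact h1
    have : tailPath μ e q.edges ht = q := FinPath.ext' h1' rfl
    exact Subtype.ext (by simp [bpOf, this])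
  | inr q => exact h2.elim

theorem not_cat_singleE {e : G.E} {μ : G.FinPath} {h : μ.rng = v}
    (hne : ∀ t, μ.edges ≠ e :: t) :
    ¬∃ p : G.BPath, IsCat (singleE G e) p (bpOf v hv μ h) := by
  rintro ⟨p, hc⟩
  obtain ⟨t, ht, -⟩ := cat_singleE_exists v hv hc
  exact hne t ht

theorem not_cat_singleE_src {e : G.E} {μ : G.FinPath} {h : μ.rng = v}
    (hne : G.r e ≠ μ.src) :
    ¬∃ q : G.BPath, IsCat (singleE G e) (bpOf v hv μ h) q := by
  rintro ⟨q, h1, -⟩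
  rw [singleE_rng] at h1
  exact hne h1

end Orbit


/-! ### Abstract "Chen family" computations -/

section AbstractChen

variable {K : Type} [Field K] (v : G.V)
variable {Y : Type} [AddCommGroup Y] [Module K Y] [Module (LPA G K) Y]
  [IsScalarTower K (LPA G K) Y]

theorem lpa_smul_comm (a : LPA G K) (c : K) (y : Y) : a • (c • y) = c • (a • y) := by
  rw [← algebraMap_smul (LPA G K) c y, ← mul_smul, ← Algebra.commutes, mul_smul,
    algebraMap_smul]

variable (B : (μ : G.FinPath) → μ.rng = v → Y)

theorem Bcongr {μ μ' : G.FinPath} (hh : μ = μ') (h : μ.rng = v) (h' : μ'.rng = v) :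
    B μ h = B μ' h' := by subst hh; rfl

variable
  (hB1 : ∀ (w : G.V) (μ : G.FinPath) (h : μ.rng = v),
    ofV G K w • B μ h = if w = μ.src then B μ h else 0)
  (hB2 : ∀ (e : G.E) (μ : G.FinPath) (h : μ.rng = v) (h' : G.r e = μ.src),
    ofE G K e • B μ h = B (consPath e μ h') ((consPath_rng e μ h').trans h))
  (hB4 : ∀ (e : G.E) (μ : G.FinPath) (h : μ.rng = v) (t : List G.E) (ht : μ.edges = e :: t),
    ofG G K e • B μ h = B (tailPath μ e t ht) ((tailPath_rng μ e t ht).trans h))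
  (hB5 : ∀ (e : G.E) (μ : G.FinPath) (h : μ.rng = v),
    (∀ t, μ.edges ≠ e :: t) → ofG G K e • B μ h = 0)

include hB1 hB2 in
theorem pathElem_smul_B (μ : G.FinPath) (h : μ.rng = v) :
    pathElem G K μ • B (vertexPath G v) (vertexPath_rng v) = B μ h := by
  suffices H : ∀ (l : List G.E) (μ : G.FinPath) (h : μ.rng = v), μ.edges = l →
      pathElem G K μ • B (vertexPath G v) (vertexPath_rng v) = B μ h from H _ μ h rfl
  intro l
  induction l with
  | nil =>
    intro μ h hl
    have hμ : μ = vertexPath G v := by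
      refine FinPath.ext' ?_ (by simp [vertexPath, hl])
      rw [← FinPath.rng_nil hl, h]; rfl
    subst hμ
    rw [pathElem_vertex, hB1]
    simp [vertexPath]
  | cons e t ih =>
    intro μ h hl
    have hμ : consPath e (tailPath μ e t hl) rfl = μ := consPath_tailPath μ e t hl
    have htr : (tailPath μ e t hl).rng = v := (tailPath_rng μ e t hl).trans h
    have h1 : pathElem G K μ = ofE G K e * pathElem G K (tailPath μ e t hl) := by
      conv_lhs => rw [← hμ]
      exact pathElem_cons _ _ _
    rw [h1, mul_smul, ih (tailPath μ e t hl) htr rfl, hB2 e _ htr rfl]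
    exact Bcongr v B hμ _ h

theorem pathStarElem_nil {ν : G.FinPath} (hl : ν.edges = []) :
    pathStarElem G K ν = ofV G K ν.src := by
  simp [pathStarElem, hl]

include hB1 hB4 hB5 in
theorem pathStarElem_smul_B (ν μ : G.FinPath) (h : μ.rng = v) :
    pathStarElem G K ν • B μ h =
      if ν.src = μ.src ∧ ν.edges <+: μ.edges then
        B (sufPath μ ν.edges.length) ((sufPath_rng μ _).trans h) else 0 := by
  suffices H : ∀ (l : List G.E) (ν : G.FinPath), ν.edges = l → ∀ (μ : G.FinPath) (h : μ.rng = v),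
      pathStarElem G K ν • B μ h =
      if ν.src = μ.src ∧ ν.edges <+: μ.edges then
        B (sufPath μ ν.edges.length) ((sufPath_rng μ _).trans h) else 0 from H _ ν rfl μ h
  intro l
  induction l with
  | nil =>
    intro ν hl μ h
    rw [pathStarElem_nil hl, hB1, hl]
    by_cases hs : ν.src = μ.src
    · rw [if_pos hs, if_pos ⟨hs, List.nil_prefix⟩]
      exact Bcongr v B (sufPath_zero μ).symm h _
    · rw [if_neg hs, if_neg (by rintro ⟨hs', -⟩; exact hs hs')]
  | cons e t ih =>
    intro ν hl μ h
    have hν : consPath e (tailPath ν e t hl) rfl = ν := consPath_tailPath ν e t hl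
    have h1 : pathStarElem G K ν = pathStarElem G K (tailPath ν e t hl) * ofG G K e := by
      conv_lhs => rw [← hν]
      exact pathStarElem_cons _ _ _
    rw [h1, mul_smul]
    rcases hm : μ.edges with _ | ⟨f, t'⟩
    · rw [hB5 e μ h (by rw [hm]; exact fun t htt => List.cons_ne_nil _ _ htt.symm), smul_zero,
        if_neg]
      rintro ⟨-, hpre⟩
      rw [hl, List.prefix_nil] at hpre
      exact List.cons_ne_nil _ _ hpre
    · by_cases hef : e = f
      · obtain rfl := hef
        rw [hB4 e μ h t' hm]
        rw [ih (tailPath ν e t hl) rfl (tailPath μ e t' hm) ((tailPath_rng μ e t' hm).trans h)]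
        have hsrc : ν.src = μ.src := by
          rw [← FinPath.src_head hl, ← FinPath.src_head hm]
        by_cases hp : t <+: t'
        · rw [if_pos ⟨rfl, (by simpa using hp : (tailPath ν e t hl).edges <+: (tailPath μ e t' hm).edges)⟩,
            if_pos ⟨hsrc, by rw [hl]; exact List.cons_prefix_cons.2 ⟨rfl, hp⟩⟩]
          refine Bcongr v B ?_ _ _
          rw [sufPath_tail μ e t' hm]
          congr 1
          simp [hl]
        · rw [if_neg (by rintro ⟨-, hpre⟩; simp at hpre; exact hp hpre),
            if_neg (by rintro ⟨-, hpre⟩; rw [hl, List.cons_prefix_cons] at hpre; exact hp hpre.2)]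
      · rw [hB5 e μ h (by rw [hm]; intro tt htt; exact hef (List.cons.inj htt).1.symm), smul_zero,
          if_neg]
        rintro ⟨-, hpre⟩
        rw [hl, List.cons_prefix_cons] at hpre
        exact hef hpre.1

include hB1 hB4 hB5 in
theorem pathStarElem_smul_sum (s : Finset {μ : G.FinPath // μ.rng = v})
    (c : {μ : G.FinPath // μ.rng = v} → K) (i₀ : {μ : G.FinPath // μ.rng = v})
    (hi₀ : i₀ ∈ s) (hmax : ∀ i ∈ s, c i ≠ 0 → i.1.edges.length ≤ i₀.1.edges.length) :
    pathStarElem G K i₀.1 • (∑ i ∈ s, c i • B i.1 i.2) =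
      c i₀ • B (vertexPath G v) (vertexPath_rng v) := by
  rw [Finset.smul_sum]
  rw [Finset.sum_eq_single i₀]
  · rw [lpa_smul_comm, pathStarElem_smul_B v B hB1 hB4 hB5,
      if_pos ⟨rfl, List.prefix_refl _⟩]
    congr 1
    exact Bcongr v B (sufPath_full i₀.2) _ _
  · intro i hi hne
    by_cases hc : c i = 0
    · rw [hc, zero_smul, smul_zero]
    · rw [lpa_smul_comm, pathStarElem_smul_B v B hB1 hB4 hB5, if_neg, smul_zero]
      rintro ⟨hs, hpre⟩
      have hlen : i₀.1.edges.length ≤ i.1.edges.length := hpre.length_le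
      have : i₀.1.edges = i.1.edges :=
        hpre.eq_of_length (le_antisymm hlen (hmax i hi hc))
      exact hne (Subtype.ext (FinPath.ext' hs this)).symm
  · intro hno; exact absurd hi₀ hno

include hB1 hB4 hB5 in
theorem B_linearIndependent (hB0 : B (vertexPath G v) (vertexPath_rng v) ≠ 0) :
    LinearIndependent K (fun i : {μ : G.FinPath // μ.rng = v} => B i.1 i.2) := by
  rw [linearIndependent_iff']
  intro s g hsum i hi
  by_contra hgi
  classical
  have hT : (s.filter (fun j => g j ≠ 0)).Nonempty := ⟨i, Finset.mem_filter.2 ⟨hi, hgi⟩⟩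
  obtain ⟨i₀, hi₀T, hmax⟩ := Finset.exists_max_image _ (fun j => j.1.edges.length) hT
  obtain ⟨hi₀s, hgi₀⟩ := Finset.mem_filter.1 hi₀T
  have := pathStarElem_smul_sum v B hB1 hB4 hB5 s g i₀ hi₀s
    (fun j hj hgj => hmax j (Finset.mem_filter.2 ⟨hj, hgj⟩))
  rw [hsum, smul_zero] at this
  have := this.symm
  rw [smul_eq_zero] at this
  rcases this with h | h
  · exact hgi₀ h
  · exact hB0 h

end AbstractChen


/-! ### Chen modules over a singular vertex -/

section ChenPart

variable {K : Type} [Field K] (v : G.V) (hv : IsSingular G v)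
variable {M : Type} [AddCommGroup M] [Module K M] [Module (LPA G K) M]
  [IsScalarTower K (LPA G K) M]
variable (sp : ChenSpec G K (fun _ => 1) (vertexBPath G v hv) M)

/-- The basis vector of the Chen module attached to a path into `v`. -/
noncomputable def chenB (μ : G.FinPath) (h : μ.rng = v) : M :=
  sp.basis ⟨bpOf v hv μ h, bpOf_mem_orbit v hv μ h⟩

theorem bpOf_congr {μ μ' : G.FinPath} (hh : μ = μ') (h : μ.rng = v) (h' : μ'.rng = v) :
    bpOf v hv μ h = bpOf v hv μ' h' := by subst hh; rfl

theorem chenB_congr {μ μ' : G.FinPath} (hh : μ = μ') (h : μ.rng = v) (h' : μ'.rng = v) :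
    chenB v hv sp μ h = chenB v hv sp μ' h' := by subst hh; rfl

theorem chenB1 (w : G.V) (μ : G.FinPath) (h : μ.rng = v) :
    ofV G K w • chenB v hv sp μ h = if w = μ.src then chenB v hv sp μ h else 0 := by
  have := sp.act_v w ⟨bpOf v hv μ h, bpOf_mem_orbit v hv μ h⟩
  simp only [chenB]; exact this

theorem chenB2 (e : G.E) (μ : G.FinPath) (h : μ.rng = v) (h' : G.r e = μ.src) :
    ofE G K e • chenB v hv sp μ h =
      chenB v hv sp (consPath e μ h') ((consPath_rng e μ h').trans h) := by
  have := sp.act_e e ⟨bpOf v hv μ h, bpOf_mem_orbit v hv μ h⟩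
    ⟨bpOf v hv (consPath e μ h') ((consPath_rng e μ h').trans h), bpOf_mem_orbit v hv _ _⟩
    (cat_singleE_cons v hv e μ h h')
  simpa [chenB] using this

theorem chenB3 (e : G.E) (μ : G.FinPath) (h : μ.rng = v) (h' : G.r e ≠ μ.src) :
    ofE G K e • chenB v hv sp μ h = 0 := by
  have := sp.act_e_zero e ⟨bpOf v hv μ h, bpOf_mem_orbit v hv μ h⟩
    (not_cat_singleE_src v hv (h := h) h')
  simpa [chenB] using this

theorem chenB4 (e : G.E) (μ : G.FinPath) (h : μ.rng = v) (t : List G.E)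
    (ht : μ.edges = e :: t) :
    ofG G K e • chenB v hv sp μ h =
      chenB v hv sp (tailPath μ e t ht) ((tailPath_rng μ e t ht).trans h) := by
  have hcat := cat_singleE_cons v hv e (tailPath μ e t ht)
    ((tailPath_rng μ e t ht).trans h) rfl
  rw [bpOf_congr v hv (consPath_tailPath μ e t ht) _ h] at hcat
  have := sp.act_g e ⟨bpOf v hv (tailPath μ e t ht) ((tailPath_rng μ e t ht).trans h),
      bpOf_mem_orbit v hv _ _⟩
    ⟨bpOf v hv μ h, bpOf_mem_orbit v hv μ h⟩ hcat
  simpa [chenB] using this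

theorem chenB5 (e : G.E) (μ : G.FinPath) (h : μ.rng = v) (hne : ∀ t, μ.edges ≠ e :: t) :
    ofG G K e • chenB v hv sp μ h = 0 := by
  have := sp.act_g_zero e ⟨bpOf v hv μ h, bpOf_mem_orbit v hv μ h⟩
    (not_cat_singleE v hv (h := h) hne)
  simpa [chenB] using this

/-- The reindexing of the orbit of the vertex path by paths into `v`. -/
noncomputable def orbEquiv : {μ : G.FinPath // μ.rng = v} ≃ ↥(orbit (vertexBPath G v hv)) where
  toFun j := ⟨bpOf v hv j.1 j.2, bpOf_mem_orbit v hv j.1 j.2⟩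
  invFun p :=
    ⟨((mem_orbit_iff v hv p.1).1 p.2).choose, ((mem_orbit_iff v hv p.1).1 p.2).choose_spec.choose⟩
  left_inv j := by
    have hs := ((mem_orbit_iff v hv (bpOf v hv j.1 j.2)).1 (bpOf_mem_orbit v hv j.1 j.2)).choose_spec.choose_spec
    exact Subtype.ext (bpOf_inj v hv hs.symm)
  right_inv p := by
    have hs := ((mem_orbit_iff v hv p.1).1 p.2).choose_spec.choose_spec
    exact Subtype.ext hs.symm

/-- The Chen basis reindexed by paths into `v`. -/
noncomputable def chenBasis : Module.Basis {μ : G.FinPath // μ.rng = v} K M :=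
  sp.basis.reindex (orbEquiv v hv).symm

theorem chenBasis_apply (j : {μ : G.FinPath // μ.rng = v}) :
    chenBasis v hv sp j = chenB v hv sp j.1 j.2 := by
  rw [chenBasis, Module.Basis.reindex_apply, Equiv.symm_symm]
  rfl

theorem ksmul_mem (P : Submodule (LPA G K) M) (c : K) {m : M} (hm : m ∈ P) : c • m ∈ P := by
  rw [← algebraMap_smul (LPA G K) c m]
  exact P.smul_mem _ hm

include hv sp in
theorem chen_finiteDimensional (hfin : {μ : G.FinPath | μ.rng = v}.Finite) :
    FiniteDimensional K M := by
  have : Finite {μ : G.FinPath // μ.rng = v} := hfin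
  have : Finite ↥(orbit (vertexBPath G v hv)) := Finite.of_equiv _ (orbEquiv v hv)
  exact Module.Finite.of_basis sp.basis

include hv sp in
theorem chen_nonzero : (∃ m : M, m ≠ 0) :=
  ⟨chenB v hv sp (vertexPath G v) (vertexPath_rng v), Module.Basis.ne_zero sp.basis _⟩

include hv sp in
theorem chen_simple (P : Submodule (LPA G K) M) : P = ⊥ ∨ P = ⊤ := by
  by_cases hbot : P = ⊥
  · exact Or.inl hbot
  right
  obtain ⟨z, hzP, hz⟩ := Submodule.ne_bot_iff P |>.1 hbot
  set b := chenBasis v hv sp with hb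
  set c := b.repr z with hc
  have hsupp : c.support.Nonempty := by
    rw [Finsupp.support_nonempty_iff]
    intro h0
    exact hz (by simpa [hc, h0] using (b.repr.injective (by simp [← hc, h0])))
  obtain ⟨i₀, hi₀, hmax⟩ := Finset.exists_max_image c.support (fun j => j.1.edges.length) hsupp
  have hzsum : z = ∑ i ∈ c.support, c i • chenB v hv sp i.1 i.2 := by
    conv_lhs => rw [← b.linearCombination_repr z]
    rw [Finsupp.linearCombination_apply, Finsupp.sum]
    exact Finset.sum_congr rfl fun i _ => by rw [chenBasis_apply]
  have hstar := pathStarElem_smul_sum v (chenB v hv sp) (chenB1 v hv sp) (chenB4 v hv sp)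
    (chenB5 v hv sp) c.support c i₀ hi₀ (fun i hi _ => hmax i hi)
  rw [← hzsum] at hstar
  have hBv : chenB v hv sp (vertexPath G v) (vertexPath_rng v) ∈ P := by
    have h1 : pathStarElem G K i₀.1 • z ∈ P := P.smul_mem _ hzP
    rw [hstar] at h1
    have h2 := ksmul_mem P (c i₀)⁻¹ h1
    rwa [← mul_smul, inv_mul_cancel₀ (Finsupp.mem_support_iff.1 hi₀), one_smul] at h2
  have hall : ∀ j : {μ : G.FinPath // μ.rng = v}, chenB v hv sp j.1 j.2 ∈ P := by
    intro j
    rw [← pathElem_smul_B v (chenB v hv sp) (chenB1 v hv sp) (chenB2 v hv sp) j.1 j.2]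
    exact P.smul_mem _ hBv
  rw [Submodule.eq_top_iff']
  intro m
  have : m = ∑ i ∈ (b.repr m).support, (b.repr m) i • chenB v hv sp i.1 i.2 := by
    conv_lhs => rw [← b.linearCombination_repr m]
    rw [Finsupp.linearCombination_apply, Finsupp.sum]
    exact Finset.sum_congr rfl fun i _ => by rw [chenBasis_apply]
  rw [this]
  exact Submodule.sum_mem P fun i _ => ksmul_mem P _ (hall i)

end ChenPart


/-! ### Induction over the Leavitt path algebra, and local units -/

section LocalUnits

variable {K : Type} [Field K]

theorem lpa_induction {C : LPA G K → Prop}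
    (halg : ∀ c : K, C (algebraMap K (LPA G K) c))
    (hv : ∀ w : G.V, C (ofV G K w)) (he : ∀ e : G.E, C (ofE G K e))
    (hg : ∀ e : G.E, C (ofG G K e))
    (hmul : ∀ a b, C a → C b → C (a * b))
    (hadd : ∀ a b, C a → C b → C (a + b)) : ∀ a, C a := by
  intro a
  obtain ⟨b, rfl⟩ := RingQuot.mkAlgHom_surjective K (LRel G K) a
  induction b using FreeAlgebra.induction with
  | grade0 c => rw [AlgHom.commutes]; exact halg c
  | grade1 x =>
    cases x with
    | vtx w => exact hv w
    | edg e => exact he e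
    | ghd e => exact hg e
  | mul a b ha hb => rw [map_mul]; exact hmul _ _ ha hb
  | add a b ha hb => rw [map_add]; exact hadd _ _ ha hb

/-- The sum of the vertex idempotents over a finite set of vertices. -/
noncomputable def usum (s : Finset G.V) : LPA G K := ∑ w ∈ s, ofV G K w

theorem usum_mul_ofV {s : Finset G.V} {w : G.V} (hw : w ∈ s) :
    (usum s : LPA G K) * ofV G K w = ofV G K w := by
  rw [usum, Finset.sum_mul, Finset.sum_eq_single w]
  · exact ofV_mul_ofV_self w
  · intro u _ hu; exact ofV_mul_ofV_ne hu
  · intro h; exact absurd hw h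

theorem usum_mul_usum {s t : Finset G.V} (hst : t ⊆ s) :
    (usum s : LPA G K) * usum t = usum t := by
  rw [usum, usum, Finset.mul_sum]
  exact Finset.sum_congr rfl fun w hw => usum_mul_ofV (hst hw)

theorem absorb_mono {s t : Finset G.V} (hst : s ⊆ t) {x : LPA G K}
    (hx : usum s * x = x) : usum t * x = x := by
  conv_lhs => rw [← hx]
  rw [← mul_assoc, usum_mul_usum hst, hx]

theorem exists_absorb_left (b : LPA G K) :
    ∀ w : G.V, ∃ s : Finset G.V, usum s * (b * ofV G K w) = b * ofV G K w := by
  induction b using lpa_induction with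
  | halg c =>
    intro w
    refine ⟨{w}, ?_⟩
    rw [Algebra.smul_def c (ofV G K w) |>.symm, mul_smul_comm]
    congr 1
    simp [usum, ofV_mul_ofV_self]
  | hv u =>
    intro w
    by_cases huw : u = w
    · subst huw
      exact ⟨{u}, by simp [usum, ofV_mul_ofV_self]⟩
    · exact ⟨∅, by rw [ofV_mul_ofV_ne huw, mul_zero]⟩
  | he e =>
    intro w
    by_cases hw : w = G.r e
    · subst hw
      exact ⟨{G.s e}, by simp [usum, ofE_mul_ofV, ofV_mul_ofE]⟩
    · exact ⟨∅, by rw [ofE_mul_ofV_ne hw, mul_zero]⟩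
  | hg e =>
    intro w
    by_cases hw : w = G.s e
    · subst hw
      exact ⟨{G.r e}, by simp [usum, ofG_mul_ofV, ofV_mul_ofG]⟩
    · exact ⟨∅, by rw [ofG_mul_ofV_ne hw, mul_zero]⟩
  | hmul a b iha ihb =>
    intro w
    obtain ⟨s, hs⟩ := ihb w
    classical
    refine ⟨s.biUnion (fun u => (iha u).choose), ?_⟩
    have huu : ∀ (u : G.V) (z : LPA G K),
        a * ofV G K u * (ofV G K u * z) = a * (ofV G K u * z) := fun u z => by
      rw [mul_assoc, ← mul_assoc (ofV G K u), ofV_mul_ofV_self]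
    have key : a * b * ofV G K w = ∑ u ∈ s, (a * ofV G K u) * (ofV G K u * (b * ofV G K w)) := by
      conv_lhs => rw [mul_assoc, ← hs]
      rw [usum, Finset.sum_mul, Finset.mul_sum]
      exact Finset.sum_congr rfl fun u _ => (huu u _).symm
    rw [key, Finset.mul_sum]
    refine Finset.sum_congr rfl fun u hu => ?_
    rw [← mul_assoc]
    congr 1
    exact absorb_mono (Finset.subset_biUnion_of_mem _ hu) (iha u).choose_spec
  | hadd a b iha ihb =>
    intro w
    obtain ⟨sa, hsa⟩ := iha w
    obtain ⟨sb, hsb⟩ := ihb w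
    refine ⟨sa ∪ sb, ?_⟩
    rw [add_mul, mul_add, absorb_mono Finset.subset_union_left hsa,
      absorb_mono Finset.subset_union_right hsb]

variable {M : Type} [AddCommGroup M] [Module K M] [Module (LPA G K) M]
  [IsScalarTower K (LPA G K) M]

theorem absorb_smul_mono {s t : Finset G.V} (hst : s ⊆ t) {m : M}
    (hm : (usum s : LPA G K) • m = m) : (usum t : LPA G K) • m = m := by
  conv_lhs => rw [← hm]
  rw [← mul_smul, usum_mul_usum hst, hm]

theorem unital_exists_usum (hu : IsUnitalModule G K M) (m : M) :
    ∃ s : Finset G.V, (usum s : LPA G K) • m = m := by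
  refine Submodule.span_induction ?_ ?_ ?_ ?_ (hu m)
  · rintro y ⟨w, m', rfl⟩
    refine ⟨{w}, ?_⟩
    have : (usum {w} : LPA G K) = ofV G K w := by simp [usum]
    rw [this, ← mul_smul, ofV_mul_ofV_self]
  · exact ⟨∅, smul_zero _⟩
  · rintro y z - - ⟨sy, hy⟩ ⟨sz, hz⟩
    exact ⟨sy ∪ sz, by rw [smul_add, absorb_smul_mono Finset.subset_union_left hy,
      absorb_smul_mono Finset.subset_union_right hz]⟩
  · rintro a y - ⟨s, hs⟩
    classical
    refine ⟨s.biUnion (fun u => (exists_absorb_left a u).choose), ?_⟩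
    have key : a • y = ((a * usum s : LPA G K)) • y := by rw [mul_smul, hs]
    have hexp : a * usum s = ∑ u ∈ s, a * ofV G K u := by rw [usum, Finset.mul_sum]
    have habs : usum (s.biUnion fun u => (exists_absorb_left a u).choose) * (a * usum s)
        = a * usum s := by
      rw [hexp, Finset.mul_sum]
      exact Finset.sum_congr rfl fun u hu =>
        absorb_mono (Finset.subset_biUnion_of_mem _ hu) (exists_absorb_left a u).choose_spec
    rw [key, ← mul_smul, habs]

theorem exists_ofV_smul_ne (hu : IsUnitalModule G K M) {m : M} (hm : m ≠ 0) :
    ∃ w : G.V, ofV G K w • m ≠ 0 := by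
  by_contra hno
  push_neg at hno
  obtain ⟨s, hs⟩ := unital_exists_usum hu m
  apply hm
  rw [← hs, usum, Finset.sum_smul]
  exact Finset.sum_eq_zero fun w _ => hno w

end LocalUnits


/-! ### Degrees of generators, and the standard family `pathElem μ • m₀` -/

section PhiFamily

variable {K : Type} [Field K]

theorem pathElem_nil {μ : G.FinPath} (hl : μ.edges = []) :
    pathElem G K μ = ofV G K μ.src := by
  simp [pathElem, hl]

theorem pathElem_singleE (e : G.E) : pathElem G K (singleE G e) = ofE G K e := by
  simp [pathElem, singleE, ofV_mul_ofE]

theorem pathStarElem_singleE (e : G.E) : pathStarElem G K (singleE G e) = ofG G K e := by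
  simp [pathStarElem, singleE, ofG_mul_ofV]

theorem ofV_mem_deg (w : G.V) : ofV G K w ∈ LPAdeg G K 0 := by
  refine Submodule.subset_span ⟨vertexPath G w, vertexPath G w, rfl, by simp [FinPath.length, vertexPath], ?_⟩
  rw [pathElem_vertex, pathStarElem_vertex, ofV_mul_ofV_self]

theorem ofE_mem_deg (e : G.E) : ofE G K e ∈ LPAdeg G K 1 := by
  refine Submodule.subset_span ⟨singleE G e, vertexPath G (G.r e),
    by rw [singleE_rng, vertexPath_rng], by simp [FinPath.length, singleE, vertexPath], ?_⟩
  rw [pathElem_singleE, pathStarElem_vertex, ofE_mul_ofV]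

theorem ofG_mem_deg (e : G.E) : ofG G K e ∈ LPAdeg G K (-1) := by
  refine Submodule.subset_span ⟨vertexPath G (G.r e), singleE G e,
    by rw [singleE_rng, vertexPath_rng], by simp [FinPath.length, singleE, vertexPath], ?_⟩
  rw [pathElem_vertex, pathStarElem_singleE, ofV_mul_ofG]

theorem pathElem_mem_deg (μ : G.FinPath) :
    pathElem G K μ ∈ LPAdeg G K (μ.edges.length : ℤ) := by
  refine Submodule.subset_span ⟨μ, vertexPath G μ.rng, (vertexPath_rng μ.rng).symm,
    by simp [FinPath.length, vertexPath], ?_⟩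
  rw [pathStarElem_vertex, pathElem_mul_rng]

theorem ofE_mul_pathElem_ne {e : G.E} {μ : G.FinPath} (h : G.r e ≠ μ.src) :
    ofE G K e * pathElem G K μ = 0 := by
  rw [pathElem, ← mul_assoc, ofE_mul_ofV_ne (fun hh => h hh.symm), zero_mul]

theorem ofG_mul_pathElem {e : G.E} {μ : G.FinPath} {t : List G.E} (ht : μ.edges = e :: t) :
    ofG G K e * pathElem G K μ = pathElem G K (tailPath μ e t ht) := by
  have h1 : pathElem G K μ = ofE G K e * pathElem G K (tailPath μ e t ht) := by
    conv_lhs => rw [← consPath_tailPath μ e t ht]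
    exact pathElem_cons _ _ _
  rw [h1, ← mul_assoc, ofG_mul_ofE_self, ofV_mul_pathElem, if_pos (tailPath_src μ e t ht).symm]

theorem ofG_mul_pathElem_ne {e f : G.E} {μ : G.FinPath} {t : List G.E}
    (ht : μ.edges = f :: t) (hef : e ≠ f) :
    ofG G K e * pathElem G K μ = 0 := by
  have h1 : pathElem G K μ = ofE G K f * pathElem G K (tailPath μ f t ht) := by
    conv_lhs => rw [← consPath_tailPath μ f t ht]
    exact pathElem_cons _ _ _
  rw [h1, ← mul_assoc, ofG_mul_ofE_ne hef, zero_mul]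

end PhiFamily

/-- The standard family generated by a ghost-killed vector at `v`. -/
def phiB (K : Type) [Field K] {M : Type} [AddCommGroup M] [Module (LPA G K) M]
    (v : G.V) (m₀ : M) (μ : G.FinPath) (_ : μ.rng = v) : M := pathElem G K μ • m₀

section PhiFamily

variable {K : Type} [Field K]
variable (v : G.V)
variable {M : Type} [AddCommGroup M] [Module K M] [Module (LPA G K) M]
  [IsScalarTower K (LPA G K) M]
variable (m₀ : M)

variable (hm₀v : ofV G K v • m₀ = m₀) (hm₀g : ∀ e : G.E, ofG G K e • m₀ = 0)

theorem phiB1 (w : G.V) (μ : G.FinPath) (h : μ.rng = v) :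
    ofV G K w • phiB K v m₀ μ h = if w = μ.src then phiB K v m₀ μ h else 0 := by
  rw [phiB, ← mul_smul, ofV_mul_pathElem]
  split <;> simp [phiB]

theorem phiB2 (e : G.E) (μ : G.FinPath) (h : μ.rng = v) (h' : G.r e = μ.src) :
    ofE G K e • phiB K v m₀ μ h =
      phiB K v m₀ (consPath e μ h') ((consPath_rng e μ h').trans h) := by
  rw [phiB, phiB, ← mul_smul, pathElem_cons]

theorem phiB3 (e : G.E) (μ : G.FinPath) (h : μ.rng = v) (h' : G.r e ≠ μ.src) :
    ofE G K e • phiB K v m₀ μ h = 0 := by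
  rw [phiB, ← mul_smul, ofE_mul_pathElem_ne h', zero_smul]

include hm₀v in
theorem phiB_vertex : phiB K v m₀ (vertexPath G v) (vertexPath_rng v) = m₀ := by
  rw [phiB, pathElem_vertex, hm₀v]

theorem phiB4 (e : G.E) (μ : G.FinPath) (h : μ.rng = v) (t : List G.E)
    (ht : μ.edges = e :: t) :
    ofG G K e • phiB K v m₀ μ h =
      phiB K v m₀ (tailPath μ e t ht) ((tailPath_rng μ e t ht).trans h) := by
  rw [phiB, phiB, ← mul_smul, ofG_mul_pathElem ht]

include hm₀v hm₀g in
theorem phiB5 (e : G.E) (μ : G.FinPath) (h : μ.rng = v) (hne : ∀ t, μ.edges ≠ e :: t) :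
    ofG G K e • phiB K v m₀ μ h = 0 := by
  rcases hm : μ.edges with _ | ⟨f, t⟩
  · have hsrc : μ.src = v := by rw [← FinPath.rng_nil hm, h]
    rw [phiB, pathElem_nil hm, hsrc, hm₀v, hm₀g]
  · have hef : e ≠ f := fun hh => hne t (by rw [hm, hh])
    rw [phiB, ← mul_smul, ofG_mul_pathElem_ne hm hef, zero_smul]

end PhiFamily


/-! ### Extracting homogeneous components -/

section Extract

variable {K : Type} [Field K] {M : Type} [AddCommGroup M] [Module K M]

theorem grading_component (W : ℤ → Submodule K M) (hint : DirectSum.IsInternal W)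
    {ι' : Type} (s : Finset ι') (c : ι' → K) (φ : ι' → M) (deg : ι' → ℤ)
    (hφ : ∀ i, φ i ∈ W (deg i)) (k : ℤ)
    (hm : (∑ i ∈ s, c i • φ i) ∈ W k) :
    ∑ i ∈ s, c i • φ i = ∑ i ∈ s.filter (fun i => deg i = k), c i • φ i := by
  classical
  have hind := hint.submodule_iSupIndep
  set m := ∑ i ∈ s, c i • φ i with hmdef
  set y := ∑ i ∈ s.filter (fun i => deg i = k), c i • φ i with hydef
  have hyW : y ∈ W k := by
    refine Submodule.sum_mem _ fun i hi => ?_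
    have hik := (Finset.mem_filter.1 hi).2
    exact (W k).smul_mem _ (hik ▸ hφ i)
  have hrest : m - y ∈ ⨆ (j : ℤ) (_ : j ≠ k), W j := by
    have hsplit : m = y + ∑ i ∈ s.filter (fun i => ¬ deg i = k), c i • φ i := by
      rw [hmdef, hydef, Finset.sum_filter_add_sum_filter_not]
    rw [hsplit, add_sub_cancel_left]
    refine Submodule.sum_mem _ fun i hi => ?_
    have hik := (Finset.mem_filter.1 hi).2
    exact Submodule.mem_iSup_of_mem (deg i) (Submodule.mem_iSup_of_mem hik
      ((W (deg i)).smul_mem _ (hφ i)))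
  have hzero : m - y = 0 := by
    have hd := (hind k).le_bot ⟨Submodule.sub_mem _ hm hyW, hrest⟩
    simpa using hd
  exact sub_eq_zero.1 hzero

end Extract


/-! ### Part 2: classification of finite-dimensional graded simple modules -/

section Part2

variable {K : Type} [Field K]

theorem part2 {M : Type} [AddCommGroup M] [Module K M] [Module (LPA G K) M]
    [IsScalarTower K (LPA G K) M]
    (hu : IsUnitalModule G K M) (hfd : FiniteDimensional K M)
    (W : ℤ → Submodule K M) (hWg : IsModuleGrading G K M W)
    (hnz : ∃ m : M, m ≠ 0)
    (hsimp : ∀ P : Submodule (LPA G K) M, GradedCarrier W ↑P → P = ⊥ ∨ P = ⊤) :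
    ∃ (v : G.V) (hv : IsSingular G v), {μ : G.FinPath | μ.rng = v}.Finite ∧
      ∃ n : ℤ, ∀ (N : Type) [AddCommGroup N] [Module K N] [Module (LPA G K) N]
        [IsScalarTower K (LPA G K) N],
        ∀ sp : ChenSpec G K (fun _ => 1) (vertexBPath G v hv) N,
        GradedIsoLPA G K M N W (fun k => chenW sp.basis (k + n)) := by
  classical
  obtain ⟨hint, hact⟩ := hWg
  have hind : iSupIndep W := hint.submodule_iSupIndep
  -- the set of degrees with nonzero component is finite and nonempty
  have hDfin : {k : ℤ | W k ≠ ⊥}.Finite := by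
    rw [← Set.finite_coe_iff]
    have hchoice : ∀ k : {k : ℤ | W k ≠ ⊥}, ∃ x ∈ W k.1, x ≠ 0 :=
      fun k => Submodule.exists_mem_ne_zero_of_ne_bot k.2
    choose xx hxx hxx0 using hchoice
    have hli : LinearIndependent K xx :=
      iSupIndep.linearIndependent _ (hind.comp Subtype.val_injective) hxx hxx0
    exact hli.finite
  have hDne : {k : ℤ | W k ≠ ⊥}.Nonempty := by
    by_contra hempty
    rw [Set.not_nonempty_iff_eq_empty] at hempty
    obtain ⟨m, hm⟩ := hnz
    have hall : ∀ k, W k = ⊥ := by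
      intro k
      by_contra hk
      have hkmem : k ∈ {k : ℤ | W k ≠ ⊥} := hk
      rw [hempty] at hkmem
      exact hkmem
    have htop : iSup W = ⊤ := hint.submodule_iSup_eq_top
    have hbot : iSup W = ⊥ := by simp [hall]
    apply hm
    have : m ∈ iSup W := htop ▸ Submodule.mem_top
    rw [hbot] at this
    simpa using this
  have hDfinne : hDfin.toFinset.Nonempty := by rwa [Set.Finite.toFinset_nonempty]
  set d := hDfin.toFinset.min' hDfinne with hd
  have hdD : W d ≠ ⊥ := hDfin.mem_toFinset.1 (hDfin.toFinset.min'_mem hDfinne)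
  have hlow : ∀ k : ℤ, k < d → W k = ⊥ := by
    intro k hk
    by_contra hkne
    exact absurd (hDfin.toFinset.min'_le k (hDfin.mem_toFinset.2 hkne)) (not_le.2 hk)
  obtain ⟨m₁, hm₁W, hm₁⟩ := Submodule.exists_mem_ne_zero_of_ne_bot hdD
  obtain ⟨v, hvne⟩ := exists_ofV_smul_ne hu hm₁
  set m₀ := ofV G K v • m₁ with hm₀def
  have hm₀W : m₀ ∈ W d := by
    have := hact 0 d (ofV G K v) m₁ (ofV_mem_deg v) hm₁W
    rwa [zero_add] at this
  have hm₀v : ofV G K v • m₀ = m₀ := by rw [hm₀def, ← mul_smul, ofV_mul_ofV_self]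
  have hm₀g : ∀ e : G.E, ofG G K e • m₀ = 0 := by
    intro e
    have h1 := hact (-1) d (ofG G K e) m₀ (ofG_mem_deg e) hm₀W
    have h2 : W (-1 + d) = ⊥ := hlow _ (by omega)
    rw [h2] at h1
    simpa using h1
  -- the vertex `v` is singular
  have hv : IsSingular G v := by
    by_contra hns
    rw [IsSingular] at hns
    push_neg at hns
    obtain ⟨hnsink, hninf⟩ := hns
    rw [IsSink] at hnsink
    push_neg at hnsink
    have hfin : {e | G.s e = v}.Finite := Set.not_infinite.1 hninf
    have hck := ck2_sum (K := K) v hfin hnsink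
    apply hvne
    calc m₀ = ofV G K v • m₀ := hm₀v.symm
      _ = ∑ e ∈ hfin.toFinset, (ofE G K e * ofG G K e) • m₀ := by
          rw [hck, Finset.sum_smul]
      _ = 0 := Finset.sum_eq_zero fun e _ => by rw [mul_smul, hm₀g, smul_zero]
  -- the standard family is linearly independent
  have hB0 : phiB K v m₀ (vertexPath G v) (vertexPath_rng v) ≠ 0 := by
    rw [phiB_vertex v m₀ hm₀v]
    exact hvne
  have hli : LinearIndependent K
      (fun i : {μ : G.FinPath // μ.rng = v} => phiB K v m₀ i.1 i.2) :=
    B_linearIndependent v (phiB K v m₀) (phiB1 v m₀) (phiB4 v m₀)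
      (phiB5 v m₀ hm₀v hm₀g) hB0
  have hfinv : {μ : G.FinPath | μ.rng = v}.Finite := by
    have : Finite {μ : G.FinPath // μ.rng = v} := hli.finite
    exact Set.finite_coe_iff.1 this
  -- the span of the family is a graded LPA-submodule
  set SpanK := Submodule.span K
    (Set.range fun i : {μ : G.FinPath // μ.rng = v} => phiB K v m₀ i.1 i.2) with hSpanK
  have hgenstep : ∀ g : LPA G K,
      (∀ i : {μ : G.FinPath // μ.rng = v}, g • phiB K v m₀ i.1 i.2 ∈ SpanK) →
      ∀ y ∈ SpanK, g • y ∈ SpanK := by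
    intro g hgen y hy
    refine Submodule.span_induction ?_ ?_ ?_ ?_ hy
    · rintro z ⟨i, rfl⟩
      exact hgen i
    · rw [smul_zero]; exact SpanK.zero_mem
    · intro a b _ _ ha hb
      rw [smul_add]; exact SpanK.add_mem ha hb
    · intro c a _ ha
      rw [lpa_smul_comm]; exact SpanK.smul_mem c ha
  have hstable : ∀ a : LPA G K, ∀ y ∈ SpanK, a • y ∈ SpanK := by
    intro a
    induction a using lpa_induction with
    | halg c =>
      intro y hy
      rw [algebraMap_smul]
      exact SpanK.smul_mem c hy
    | hmul a b iha ihb =>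
      intro y hy
      rw [mul_smul]
      exact iha _ (ihb y hy)
    | hadd a b iha ihb =>
      intro y hy
      rw [add_smul]
      exact SpanK.add_mem (iha y hy) (ihb y hy)
    | hv w =>
      refine hgenstep _ fun i => ?_
      by_cases hw : w = i.1.src
      · rw [phiB1, if_pos hw]
        exact Submodule.subset_span ⟨i, rfl⟩
      · rw [phiB1, if_neg hw]
        exact SpanK.zero_mem
    | he e =>
      refine hgenstep _ fun i => ?_
      by_cases hre : G.r e = i.1.src
      · rw [phiB2 v m₀ e i.1 i.2 hre]
        exact Submodule.subset_span ⟨⟨consPath e i.1 hre, (consPath_rng e i.1 hre).trans i.2⟩, rfl⟩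
      · rw [phiB3 v m₀ e i.1 i.2 hre]
        exact SpanK.zero_mem
    | hg e =>
      refine hgenstep _ fun i => ?_
      by_cases hex : ∃ t, i.1.edges = e :: t
      · obtain ⟨t, ht⟩ := hex
        rw [phiB4 v m₀ e i.1 i.2 t ht]
        exact Submodule.subset_span
          ⟨⟨tailPath i.1 e t ht, (tailPath_rng i.1 e t ht).trans i.2⟩, rfl⟩
      · push_neg at hex
        rw [phiB5 v m₀ hm₀v hm₀g e i.1 i.2 hex]
        exact SpanK.zero_mem
  set P : Submodule (LPA G K) M :=
    { carrier := SpanK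
      add_mem' := fun hx hy => SpanK.add_mem hx hy
      zero_mem' := SpanK.zero_mem
      smul_mem' := fun a {x} hx => hstable a x hx } with hP
  have hdegB : ∀ i : {μ : G.FinPath // μ.rng = v},
      phiB K v m₀ i.1 i.2 ∈ W ((i.1.edges.length : ℤ) + d) := fun i =>
    hact _ _ _ _ (pathElem_mem_deg i.1) hm₀W
  have hgc : GradedCarrier W ↑P := by
    intro m hm
    have hm' : m ∈ SpanK := hm
    rw [hSpanK, Submodule.mem_span_set] at hm'
    obtain ⟨cf, hcfsupp, hcfsum⟩ := hm'
    refine ⟨cf.support.toList.map (fun z => cf z • z), ?_, ?_⟩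
    · intro z hz
      rw [List.mem_map] at hz
      obtain ⟨z₀, hz₀, rfl⟩ := hz
      have hz₀supp : z₀ ∈ cf.support := Finset.mem_toList.1 hz₀
      obtain ⟨i, rfl⟩ := hcfsupp hz₀supp
      constructor
      · exact SpanK.smul_mem _ (Submodule.subset_span ⟨i, rfl⟩)
      · exact ⟨(i.1.edges.length : ℤ) + d, (W _).smul_mem _ (hdegB i)⟩
    · rw [Finset.sum_map_toList]
      exact hcfsum
  have hm₀SpanK : m₀ ∈ SpanK := by
    have : phiB K v m₀ (vertexPath G v) (vertexPath_rng v) ∈ SpanK :=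
      Submodule.subset_span ⟨⟨vertexPath G v, vertexPath_rng v⟩, rfl⟩
    rwa [phiB_vertex v m₀ hm₀v] at this
  have hsp : ⊤ ≤ SpanK := by
    rcases hsimp P hgc with hbot | htop
    · exfalso
      apply hvne
      have : m₀ ∈ P := hm₀SpanK
      rw [hbot] at this
      simpa using this
    · intro x _
      have : x ∈ P := htop ▸ Submodule.mem_top
      exact this
  set ΦB : Module.Basis {μ : G.FinPath // μ.rng = v} K M := Module.Basis.mk hli hsp with hΦB
  refine ⟨v, hv, hfinv, -d, ?_⟩
  intro N _ _ _ _ sp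
  set bN := chenBasis v hv sp with hbN
  set f₀ : N ≃ₗ[K] M := bN.equiv ΦB (Equiv.refl _) with hf₀def
  have hf₀ : ∀ i, f₀ (bN i) = phiB K v m₀ i.1 i.2 := by
    intro i
    rw [hf₀def, Module.Basis.equiv_apply, Equiv.refl_apply, hΦB, Module.Basis.mk_apply]
  have hgenN : ∀ g : LPA G K, (∀ i, f₀ (g • bN i) = g • f₀ (bN i)) →
      ∀ nn : N, f₀ (g • nn) = g • f₀ nn := by
    intro g hgen nn
    have hnn : nn = ∑ i ∈ (bN.repr nn).support, (bN.repr nn) i • bN i := by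
      conv_lhs => rw [← bN.linearCombination_repr nn]
      rw [Finsupp.linearCombination_apply, Finsupp.sum]
    rw [hnn, Finset.smul_sum, map_sum, map_sum, Finset.smul_sum]
    refine Finset.sum_congr rfl fun i _ => ?_
    rw [lpa_smul_comm, map_smul f₀ (bN.repr nn i) (g • bN i), hgen i,
      map_smul f₀ (bN.repr nn i) (bN i), lpa_smul_comm]
  have hcomm : ∀ (a : LPA G K) (nn : N), f₀ (a • nn) = a • f₀ nn := by
    intro a
    induction a using lpa_induction with
    | halg c =>
      intro nn
      rw [algebraMap_smul, map_smul, algebraMap_smul]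
    | hmul a b iha ihb =>
      intro nn
      rw [mul_smul, iha, ihb, mul_smul]
    | hadd a b iha ihb =>
      intro nn
      rw [add_smul, map_add, iha, ihb, add_smul]
    | hv w =>
      refine hgenN _ fun i => ?_
      have hbNi : bN i = chenB v hv sp i.1 i.2 := chenBasis_apply v hv sp i
      by_cases hw : w = i.1.src
      · rw [hbNi, chenB1 v hv sp w i.1 i.2, if_pos hw, ← hbNi, hf₀ i, phiB1, if_pos hw]
      · rw [hbNi, chenB1 v hv sp w i.1 i.2, if_neg hw, map_zero, ← hbNi, hf₀ i,
          phiB1, if_neg hw]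
    | he e =>
      refine hgenN _ fun i => ?_
      have hbNi : bN i = chenB v hv sp i.1 i.2 := chenBasis_apply v hv sp i
      by_cases hre : G.r e = i.1.src
      · have hbNi' : bN ⟨consPath e i.1 hre, (consPath_rng e i.1 hre).trans i.2⟩ =
            chenB v hv sp (consPath e i.1 hre) ((consPath_rng e i.1 hre).trans i.2) :=
          chenBasis_apply v hv sp _
        rw [hbNi, chenB2 v hv sp e i.1 i.2 hre, ← hbNi',
          hf₀ ⟨consPath e i.1 hre, (consPath_rng e i.1 hre).trans i.2⟩, ← hbNi, hf₀ i,
          phiB2 v m₀ e i.1 i.2 hre]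
      · rw [hbNi, chenB3 v hv sp e i.1 i.2 hre, map_zero, ← hbNi, hf₀ i,
          phiB3 v m₀ e i.1 i.2 hre]
    | hg e =>
      refine hgenN _ fun i => ?_
      have hbNi : bN i = chenB v hv sp i.1 i.2 := chenBasis_apply v hv sp i
      by_cases hex : ∃ t, i.1.edges = e :: t
      · obtain ⟨t, ht⟩ := hex
        have hbNi' : bN ⟨tailPath i.1 e t ht, (tailPath_rng i.1 e t ht).trans i.2⟩ =
            chenB v hv sp (tailPath i.1 e t ht) ((tailPath_rng i.1 e t ht).trans i.2) :=
          chenBasis_apply v hv sp _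
        rw [hbNi, chenB4 v hv sp e i.1 i.2 t ht, ← hbNi',
          hf₀ ⟨tailPath i.1 e t ht, (tailPath_rng i.1 e t ht).trans i.2⟩, ← hbNi, hf₀ i,
          phiB4 v m₀ e i.1 i.2 t ht]
      · push_neg at hex
        rw [hbNi, chenB5 v hv sp e i.1 i.2 hex, map_zero, ← hbNi, hf₀ i,
          phiB5 v m₀ hm₀v hm₀g e i.1 i.2 hex]
  have hcomm' : ∀ (a : LPA G K) (m : M), f₀.symm (a • m) = a • f₀.symm m := by
    intro a m
    apply f₀.injective
    rw [f₀.apply_symm_apply, hcomm, f₀.apply_symm_apply]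
  set F : M ≃ₗ[LPA G K] N :=
    { toFun := f₀.symm
      map_add' := fun x y => map_add f₀.symm x y
      map_smul' := hcomm'
      invFun := f₀
      left_inv := f₀.apply_symm_apply
      right_inv := f₀.symm_apply_apply } with hF
  have hFapp : ∀ m : M, F m = f₀.symm m := fun m => rfl
  have hFsymm : ∀ nn : N, F.symm nn = f₀ nn := fun nn => rfl
  have hFB : ∀ i, F (phiB K v m₀ i.1 i.2) = bN i := by
    intro i
    rw [hFapp, ← hf₀ i, f₀.symm_apply_apply]
  have hFk : ∀ (c : K) (x : M), F (c • x) = c • F x := by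
    intro c x
    rw [← algebraMap_smul (LPA G K) c x, ← algebraMap_smul (LPA G K) c (F x), map_smul]
  have hbNmem : ∀ (i : {μ : G.FinPath // μ.rng = v}) (j : ℤ),
      (i.1.edges.length : ℤ) = j → bN i ∈ chenW sp.basis j := by
    intro i j hj
    refine Submodule.subset_span ?_
    refine ⟨⟨bpOf v hv i.1 i.2, bpOf_mem_orbit v hv i.1 i.2⟩, ?_, ?_⟩
    · exact (tailEqLag_iff v hv _ j).2 ⟨i.1, i.2, rfl, hj⟩
    · rw [hbN, chenBasis_apply]
      rfl
  refine ⟨F, ?_, ?_⟩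
  · intro k m hm
    have hrepr : m = ∑ i ∈ (ΦB.repr m).support, (ΦB.repr m) i • phiB K v m₀ i.1 i.2 := by
      conv_lhs => rw [← ΦB.linearCombination_repr m]
      rw [Finsupp.linearCombination_apply, Finsupp.sum]
      exact Finset.sum_congr rfl fun i _ => by rw [hΦB, Module.Basis.mk_apply]
    have hext := grading_component W hint (ΦB.repr m).support (fun i => ΦB.repr m i)
      (fun i => phiB K v m₀ i.1 i.2) (fun i => (i.1.edges.length : ℤ) + d) hdegB k
      (by rw [← hrepr]; exact hm)
    rw [hrepr, hext, map_sum]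
    refine Submodule.sum_mem _ fun i hi => ?_
    have hik := (Finset.mem_filter.1 hi).2
    rw [hFk, hFB i]
    have hik' : (i.1.edges.length : ℤ) + d = k := hik
    exact Submodule.smul_mem _ _ (hbNmem i (k + -d) (by omega))
  · intro k nn hnn
    refine Submodule.span_induction ?_ ?_ ?_ ?_ hnn
    · rintro z ⟨p, hp, rfl⟩
      obtain ⟨μ, h, hp1, hlen⟩ := (tailEqLag_iff v hv p.1 (k + -d)).1 hp
      have hpe : p = ⟨bpOf v hv μ h, bpOf_mem_orbit v hv μ h⟩ := Subtype.ext hp1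
      rw [hFsymm, hpe]
      have : sp.basis ⟨bpOf v hv μ h, bpOf_mem_orbit v hv μ h⟩ = bN ⟨μ, h⟩ := by
        rw [hbN, chenBasis_apply]
        rfl
      rw [this, hf₀ ⟨μ, h⟩]
      have := hdegB ⟨μ, h⟩
      have hk : (μ.edges.length : ℤ) + d = k := by omega
      rwa [hk] at this
    · rw [hFsymm, map_zero]; exact (W k).zero_mem
    · intro a b _ _ ha hb
      rw [hFsymm, map_add]
      exact (W k).add_mem ha hb
    · intro c a _ ha
      rw [hFsymm, map_smul]
      exact (W k).smul_mem c ha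

end Part2

end DirGraph

/-- finite-dimensional graded simple `L_K(E)`-modules: up to graded
isomorphism they are exactly the shifted Chen modules `V_{[x]}(n)`, where `n ∈ ℤ` and `x`
is a singular vertex such that the set of finite paths ending at `x` is finite. -/
theorem stmt_15 (G : DirGraph) (K : Type) [Field K] :
    -- each such `V_{[x]}(n)` is a finite-dimensional graded simple module
    (∀ (v : G.V) (hv : IsSingular G v), {μ : G.FinPath | μ.rng = v}.Finite →
      ∀ n : ℤ,
      ∀ (M : Type) [AddCommGroup M] [Module K M] [Module (LPA G K) M]
        [IsScalarTower K (LPA G K) M],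
      ∀ sp : ChenSpec G K (fun _ => 1) (vertexBPath G v hv) M,
      FiniteDimensional K M ∧ (∃ m : M, m ≠ 0) ∧
        ∀ P : Submodule (LPA G K) M,
          GradedCarrier (fun k => chenW sp.basis (k + n)) ↑P → P = ⊥ ∨ P = ⊤) ∧
    -- conversely, every finite-dimensional graded simple module is of this form
    (∀ (M : Type) [AddCommGroup M] [Module K M] [Module (LPA G K) M]
      [IsScalarTower K (LPA G K) M],
      IsUnitalModule G K M → FiniteDimensional K M →
      ∀ W : ℤ → Submodule K M, IsModuleGrading G K M W →
      ((∃ m : M, m ≠ 0) ∧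
        ∀ P : Submodule (LPA G K) M, GradedCarrier W ↑P → P = ⊥ ∨ P = ⊤) →
      ∃ (v : G.V) (hv : IsSingular G v), {μ : G.FinPath | μ.rng = v}.Finite ∧
        ∃ n : ℤ,
        ∀ (N : Type) [AddCommGroup N] [Module K N] [Module (LPA G K) N]
          [IsScalarTower K (LPA G K) N],
        ∀ sp : ChenSpec G K (fun _ => 1) (vertexBPath G v hv) N,
        GradedIsoLPA G K M N W (fun k => chenW sp.basis (k + n))) := by
  constructor
  · intro v hv hfin n M _ _ _ _ sp
    exact ⟨chen_finiteDimensional v hv sp hfin, chen_nonzero v hv sp,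
      fun P _ => chen_simple v hv sp P⟩
  · intro M _ _ _ _ hu hfd W hWg hpair
    exact part2 hu hfd W hWg hpair.1 hpair.2
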